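/- Let u_1,…,u_l, v_1,…,v_m be positive rationals, n_1,…,n_l, m_1,…,m_m positive integers, n = lcm(n_1,…,n_l), c_1,…,c_l integers with ∑_i c_i·(n/n_i) = 1, and x₀ = ∏_i u_i^{−c_i·n/n_i}. Then there exists a positive rational x such that (u_i·x is an n_i-th power for all i) and (v_k·x is not an m_k-th power for all k) if and only if (u_i·u_j⁻¹ is a gcd(n_i,n_j)-th power for all i ≠ j) and (for all k with m_k ∣ n, v_k·x₀ is not an m_k-th power). -/

import Mathlib

lemma pvr_zpow {p : ℕ} [Fact p.Prime] {q : ℚ} (hq : q ≠ 0) (z : ℤ) :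
    padicValRat p (q ^ z) = z * padicValRat p q := by
  cases z with
  | ofNat k =>
      rw [Int.ofNat_eq_coe, zpow_natCast, padicValRat.pow _]
  | negSucc k =>
      rw [zpow_negSucc, padicValRat.inv, padicValRat.pow _, Int.negSucc_eq]
      push_cast; ring

lemma pvr_prod {p : ℕ} [Fact p.Prime] {ι : Type*} (s : Finset ι) (f : ι → ℚ)
    (hf : ∀ i ∈ s, f i ≠ 0) :
    padicValRat p (∏ i ∈ s, f i) = ∑ i ∈ s, padicValRat p (f i) := by
  induction s using Finset.cons_induction with
  | empty => simp
  | cons i s his ih =>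
      rw [Finset.prod_cons, Finset.sum_cons,
        padicValRat.mul (hf i (Finset.mem_cons_self _ _))
          (Finset.prod_ne_zero_iff.mpr fun j hj => hf j (Finset.mem_cons_of_mem hj)),
        ih fun j hj => hf j (Finset.mem_cons_of_mem hj)]

lemma exists_root_nat {m k : ℕ} (hm : m ≠ 0) (h : ∀ p : ℕ, p.Prime → k ∣ m.factorization p) :
    ∃ a : ℕ, 0 < a ∧ m = a ^ k := by
  have h' : ∀ p, k ∣ m.factorization p := by
    intro p
    by_cases hp : p.Prime
    · exact h p hp
    · simp [Nat.factorization_eq_zero_of_not_prime m hp]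
  have key : (m.factorization.prod fun p e => p ^ (e / k)) ^ k = m := by
    rw [Finsupp.prod, ← Finset.prod_pow]
    conv_rhs => rw [← Nat.factorization_prod_pow_eq_self hm, Finsupp.prod]
    exact Finset.prod_congr rfl fun p _ => by rw [← pow_mul, Nat.div_mul_cancel (h' p)]
  refine ⟨_, ?_, key.symm⟩
  rw [Finsupp.prod]
  exact Finset.prod_pos fun p hp => pow_pos
    ((Nat.prime_of_mem_primeFactors (by rwa [← Nat.support_factorization])).pos) _

lemma isPow_iff {q : ℚ} (hq : 0 < q) {k : ℕ} (hk : 0 < k) :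
    (∃ y : ℚ, 0 < y ∧ q = y ^ k) ↔ ∀ p : ℕ, p.Prime → (k : ℤ) ∣ padicValRat p q := by
  constructor
  · rintro ⟨y, hy, rfl⟩ p hp
    haveI := Fact.mk hp
    rw [padicValRat.pow _]
    exact Dvd.intro _ rfl
  · intro h
    have hqn : q ≠ 0 := ne_of_gt hq
    have hnum : q.num ≠ 0 := Rat.num_ne_zero.mpr hqn
    have hA : q.num.natAbs ≠ 0 := Int.natAbs_ne_zero.mpr hnum
    have hB : q.den ≠ 0 := q.den_nz
    have hcop : Nat.Coprime q.num.natAbs q.den := q.reduced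
    have hnotboth : ∀ p : ℕ, p.Prime → p ∣ q.num.natAbs → p ∣ q.den → False := by
      intro p hp h1 h2
      exact hp.ne_one (Nat.eq_one_of_dvd_one (hcop ▸ Nat.dvd_gcd h1 h2))
    have hval : ∀ p : ℕ, p.Prime →
        padicValRat p q = (padicValNat p q.num.natAbs : ℤ) - padicValNat p q.den := by
      intro p hp
      rw [padicValRat_def, padicValInt]
    have hAfac : ∀ p : ℕ, p.Prime → k ∣ (q.num.natAbs).factorization p := by
      intro p hp
      by_cases hdvd : p ∣ q.num.natAbs
      · have h2 : ¬ p ∣ q.den := fun hc => hnotboth p hp hdvd hc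
        have := h p hp
        rw [hval p hp, padicValNat.eq_zero_of_not_dvd h2] at this
        rw [Nat.factorization_def _ hp]
        exact_mod_cast (by simpa using this : (k : ℤ) ∣ (padicValNat p q.num.natAbs : ℤ))
      · simp [Nat.factorization_eq_zero_of_not_dvd hdvd]
    have hBfac : ∀ p : ℕ, p.Prime → k ∣ (q.den).factorization p := by
      intro p hp
      by_cases hdvd : p ∣ q.den
      · have h2 : ¬ p ∣ q.num.natAbs := fun hc => hnotboth p hp hc hdvd
        have := h p hp
        rw [hval p hp, padicValNat.eq_zero_of_not_dvd h2] at this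
        rw [Nat.factorization_def _ hp]
        have : (k : ℤ) ∣ (padicValNat p q.den : ℤ) := by
          simpa using this.neg_right
        exact_mod_cast this
      · simp [Nat.factorization_eq_zero_of_not_dvd hdvd]
    obtain ⟨a, ha, hma⟩ := exists_root_nat hA hAfac
    obtain ⟨b, hb, hmb⟩ := exists_root_nat hB hBfac
    refine ⟨(a : ℚ) / b, by positivity, ?_⟩
    have hnum' : q.num = (q.num.natAbs : ℤ) := by
      rw [Int.natAbs_of_nonneg (le_of_lt (Rat.num_pos.mpr hq))]
    have h1 : (q.num : ℚ) = (a : ℚ) ^ k := by rw [hnum', hma]; push_cast; ring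
    have h2 : (q.den : ℚ) = (b : ℚ) ^ k := by rw [hmb]; push_cast; ring
    rw [← Rat.num_div_den q, h1, h2, div_pow]

lemma pvr_eq_zero {p : ℕ} [Fact p.Prime] {q : ℚ} (h1 : ¬ p ∣ q.num.natAbs)
    (h2 : ¬ p ∣ q.den) : padicValRat p q = 0 := by
  rw [padicValRat_def, padicValInt, padicValNat.eq_zero_of_not_dvd h1,
    padicValNat.eq_zero_of_not_dvd h2]
  simp

theorem stmt_10 (l m : ℕ) (u : Fin l → ℚ) (hu : ∀ i, 0 < u i)
    (v : Fin m → ℚ) (hv : ∀ k, 0 < v k)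
    (N : Fin l → ℕ) (hN : ∀ i, 0 < N i)
    (M : Fin m → ℕ) (hM : ∀ k, 0 < M k)
    (n : ℕ) (hn : n = Finset.univ.lcm N)
    (c : Fin l → ℤ) (hc : ∑ i, c i * ((n : ℤ) / (N i : ℤ)) = 1)
    (x₀ : ℚ) (hx₀ : x₀ = ∏ i, (u i) ^ (-(c i * ((n : ℤ) / (N i : ℤ))))) :
    (∃ x : ℚ, 0 < x ∧ (∀ i, ∃ y : ℚ, 0 < y ∧ u i * x = y ^ N i) ∧
        (∀ k, ¬ ∃ y : ℚ, 0 < y ∧ v k * x = y ^ M k)) ↔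
      (∀ i j, i ≠ j → ∃ y : ℚ, 0 < y ∧ u i * (u j)⁻¹ = y ^ Nat.gcd (N i) (N j)) ∧
        (∀ k, M k ∣ n → ¬ ∃ y : ℚ, 0 < y ∧ v k * x₀ = y ^ M k) := by
  -- basic facts
  have hdvd : ∀ i, N i ∣ n := fun i => hn ▸ Finset.dvd_lcm (Finset.mem_univ i)
  set D : Fin l → ℤ := fun i => (n : ℤ) / (N i : ℤ) with hDdef
  have hD : ∀ i, (N i : ℤ) * D i = n := fun i =>
    Int.mul_ediv_cancel' (Int.natCast_dvd_natCast.mpr (hdvd i))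
  have hc' : ∑ i, c i * D i = 1 := hc
  have hx₀' : x₀ = ∏ i, (u i) ^ (-(c i * D i)) := hx₀
  have hupos : ∀ i, u i ≠ 0 := fun i => ne_of_gt (hu i)
  have hx₀pos : 0 < x₀ := by
    rw [hx₀']
    exact Finset.prod_pos fun i _ => zpow_pos (hu i) _
  have val_x₀ : ∀ (p : ℕ) [Fact p.Prime],
      padicValRat p x₀ = ∑ i, -(c i * D i) * padicValRat p (u i) := by
    intro p _
    rw [hx₀', pvr_prod _ _ fun i _ => zpow_ne_zero _ (hupos i)]
    exact Finset.sum_congr rfl fun i _ => pvr_zpow (hupos i) _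
  constructor
  · rintro ⟨x, hxpos, h1, h2⟩
    have hxne : x ≠ 0 := ne_of_gt hxpos
    choose y hypos hyeq using h1
    have hval : ∀ i (p : ℕ) [Fact p.Prime],
        padicValRat p (u i) + padicValRat p x = (N i : ℤ) * padicValRat p (y i) := by
      intro i p _
      rw [← padicValRat.mul (hupos i) hxne, hyeq i, padicValRat.pow _]
    constructor
    · intro i j hij
      refine (isPow_iff (mul_pos (hu i) (inv_pos.mpr (hu j)))
        (Nat.gcd_pos_of_pos_left _ (hN i))).mpr ?_
      intro p hp
      haveI := Fact.mk hp
      have h1 : padicValRat p (u i * (u j)⁻¹) = padicValRat p (u i) - padicValRat p (u j) := by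
        rw [padicValRat.mul (hupos i) (inv_ne_zero (hupos j)), padicValRat.inv]
        ring
      rw [h1]
      have e1 := hval i p
      have e2 := hval j p
      have : padicValRat p (u i) - padicValRat p (u j)
          = (N i : ℤ) * padicValRat p (y i) - (N j : ℤ) * padicValRat p (y j) := by
        linear_combination e1 - e2
      rw [this]
      exact dvd_sub
        (Dvd.dvd.mul_right (Int.natCast_dvd_natCast.mpr (Nat.gcd_dvd_left _ _)) _)
        (Dvd.dvd.mul_right (Int.natCast_dvd_natCast.mpr (Nat.gcd_dvd_right _ _)) _)
    · intro k hMk hcon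
      apply h2 k
      have hvx₀pos : 0 < v k * x₀ := mul_pos (hv k) hx₀pos
      have hdiv := (isPow_iff hvx₀pos (hM k)).mp hcon
      refine (isPow_iff (mul_pos (hv k) hxpos) (hM k)).mpr ?_
      intro p hp
      haveI := Fact.mk hp
      have hdiff : padicValRat p x - padicValRat p x₀
          = (n : ℤ) * ∑ i, c i * padicValRat p (y i) := by
        have hx : padicValRat p x = ∑ i, c i * D i * padicValRat p x := by
          rw [← Finset.sum_mul, hc', one_mul]
        rw [val_x₀ p, hx, ← Finset.sum_sub_distrib, Finset.mul_sum]
        refine Finset.sum_congr rfl fun i _ => ?_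
        have e1 := hval i p
        have e2 := hD i
        linear_combination (c i * D i) * e1 + (c i * padicValRat p (y i)) * e2
      have hsplit : padicValRat p (v k * x)
          = padicValRat p (v k * x₀) + (padicValRat p x - padicValRat p x₀) := by
        rw [padicValRat.mul (ne_of_gt (hv k)) hxne,
          padicValRat.mul (ne_of_gt (hv k)) (ne_of_gt hx₀pos)]
        ring
      rw [hsplit, hdiff]
      exact dvd_add (hdiv p hp)
        (Dvd.dvd.mul_right (Int.natCast_dvd_natCast.mpr hMk) _)
  · rintro ⟨h1, h2⟩
    have hgcd : ∀ (p : ℕ) [Fact p.Prime], ∀ i j,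
        (Nat.gcd (N i) (N j) : ℤ) ∣ padicValRat p (u i) - padicValRat p (u j) := by
      intro p hp i j
      by_cases hij : i = j
      · subst hij; simp
      · have hdv := (isPow_iff (mul_pos (hu i) (inv_pos.mpr (hu j)))
          (Nat.gcd_pos_of_pos_left _ (hN i))).mp (h1 i j hij) p hp.out
        have heq : padicValRat p (u i * (u j)⁻¹)
            = padicValRat p (u i) - padicValRat p (u j) := by
          rw [padicValRat.mul (hupos i) (inv_ne_zero (hupos j)), padicValRat.inv]; ring
        rwa [heq] at hdv
    have hNiDj : ∀ i j, (N i : ℤ) ∣ D j * (Nat.gcd (N i) (N j) : ℤ) := by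
      intro i j
      obtain ⟨t, ht⟩ : Nat.lcm (N i) (N j) ∣ n := by
        rw [hn]; exact Nat.lcm_dvd (hn ▸ hdvd i) (hn ▸ hdvd j)
      have hNj : (N j : ℤ) ≠ 0 := by exact_mod_cast (hN j).ne'
      have hg : (Nat.gcd (N i) (N j) : ℤ) * (Nat.lcm (N i) (N j) : ℤ)
          = (N i : ℤ) * (N j : ℤ) := by exact_mod_cast Nat.gcd_mul_lcm (N i) (N j)
      have hn' : (n : ℤ) = (Nat.lcm (N i) (N j) : ℤ) * t := by exact_mod_cast ht
      have hmul : (N j : ℤ) * (D j * (Nat.gcd (N i) (N j) : ℤ))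
          = (N j : ℤ) * ((N i : ℤ) * t) := by
        rw [← mul_assoc, hD j]
        linear_combination (t : ℤ) * hg + (Nat.gcd (N i) (N j) : ℤ) * hn'
      exact ⟨t, mul_left_cancel₀ hNj hmul⟩
    have hux₀ : ∀ (p : ℕ) [Fact p.Prime], ∀ i, (N i : ℤ) ∣ padicValRat p (u i * x₀) := by
      intro p hp i
      rw [padicValRat.mul (hupos i) (ne_of_gt hx₀pos), val_x₀ p]
      have expand : padicValRat p (u i) + ∑ j, -(c j * D j) * padicValRat p (u j)
          = ∑ j, c j * D j * (padicValRat p (u i) - padicValRat p (u j)) := by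
        simp only [mul_sub, Finset.sum_sub_distrib, ← Finset.sum_mul, hc', one_mul,
          neg_mul, Finset.sum_neg_distrib]
        ring
      rw [expand]
      refine Finset.dvd_sum fun j _ => ?_
      obtain ⟨w, hw⟩ := hNiDj i j
      obtain ⟨s, hs⟩ := hgcd p i j
      exact ⟨c j * (w * s), by linear_combination (c j * s) * hw + (c j * D j) * hs⟩
    -- choose a fresh prime
    set B : ℕ := (x₀.num.natAbs * x₀.den) * ∏ k, ((v k).num.natAbs * (v k).den) with hB
    have hBpos : 0 < B := by
      apply mul_pos
      · exact mul_pos (Int.natAbs_pos.mpr (Rat.num_ne_zero.mpr (ne_of_gt hx₀pos))) x₀.pos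
      · exact Finset.prod_pos fun k _ => mul_pos
          (Int.natAbs_pos.mpr (Rat.num_ne_zero.mpr (ne_of_gt (hv k)))) (v k).pos
    obtain ⟨p, hpB, hp⟩ := Nat.exists_infinite_primes (B + 1)
    haveI := Fact.mk hp
    have hpQ : (0 : ℚ) < p := by exact_mod_cast hp.pos
    have hfresh : ∀ {q : ℚ}, q ≠ 0 → q.num.natAbs * q.den ∣ B → padicValRat p q = 0 := by
      intro q hq hdvdB
      have hnum : ¬ p ∣ q.num.natAbs := by
        intro hpd
        have : p ≤ B := Nat.le_of_dvd hBpos (hpd.trans ((dvd_mul_right _ _).trans hdvdB))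
        omega
      have hden : ¬ p ∣ q.den := by
        intro hpd
        have : p ≤ B := Nat.le_of_dvd hBpos (hpd.trans ((dvd_mul_left _ _).trans hdvdB))
        omega
      exact pvr_eq_zero hnum hden
    have hvalp_x₀ : padicValRat p x₀ = 0 := hfresh (ne_of_gt hx₀pos) (dvd_mul_right _ _)
    have hvalp_v : ∀ k, padicValRat p (v k) = 0 := fun k =>
      hfresh (ne_of_gt (hv k))
        (Dvd.dvd.mul_left (Finset.dvd_prod_of_mem _ (Finset.mem_univ k)) _)
    have hvalpp : padicValRat p ((p : ℚ)) = 1 := padicValRat.self hp.one_lt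
    have hPne : ((p : ℚ)) ^ n ≠ 0 := by positivity
    refine ⟨x₀ * (p : ℚ) ^ n, mul_pos hx₀pos (pow_pos hpQ n), ?_, ?_⟩
    · intro i
      refine (isPow_iff (mul_pos (hu i) (mul_pos hx₀pos (pow_pos hpQ n))) (hN i)).mpr ?_
      intro q hq
      haveI := Fact.mk hq
      have hre : u i * (x₀ * (p : ℚ) ^ n) = (u i * x₀) * (p : ℚ) ^ n := by ring
      rw [hre, padicValRat.mul (mul_ne_zero (hupos i) (ne_of_gt hx₀pos)) hPne,
        padicValRat.pow _]
      exact dvd_add (hux₀ q i)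
        ((Int.natCast_dvd_natCast.mpr (hdvd i)).trans
          ⟨padicValRat q ((p : ℚ)), rfl⟩)
    · intro k hcon
      have hdiv := (isPow_iff (mul_pos (hv k) (mul_pos hx₀pos (pow_pos hpQ n))) (hM k)).mp hcon
      by_cases hMn : M k ∣ n
      · refine h2 k hMn ((isPow_iff (mul_pos (hv k) hx₀pos) (hM k)).mpr ?_)
        intro q hq
        haveI := Fact.mk hq
        have hsplit : padicValRat q (v k * (x₀ * (p : ℚ) ^ n))
            = padicValRat q (v k * x₀) + (n : ℤ) * padicValRat q ((p : ℚ)) := by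
          have hre : v k * (x₀ * (p : ℚ) ^ n) = (v k * x₀) * (p : ℚ) ^ n := by ring
          rw [hre, padicValRat.mul (mul_ne_zero (ne_of_gt (hv k)) (ne_of_gt hx₀pos)) hPne,
            padicValRat.pow _]
        have hd := hdiv q hq
        rw [hsplit] at hd
        have hd2 : (M k : ℤ) ∣ (n : ℤ) * padicValRat q ((p : ℚ)) :=
          Dvd.dvd.mul_right (Int.natCast_dvd_natCast.mpr hMn) _
        exact (dvd_add_right hd2).mp (by rwa [add_comm] at hd)
      · exfalso
        have hd := hdiv p hp
        have hsplitp : padicValRat p (v k * (x₀ * (p : ℚ) ^ n)) = (n : ℤ) := by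
          rw [padicValRat.mul (ne_of_gt (hv k)) (mul_ne_zero (ne_of_gt hx₀pos) hPne),
            padicValRat.mul (ne_of_gt hx₀pos) hPne, padicValRat.pow _,
            hvalp_x₀, hvalp_v k, hvalpp]
          ring
        rw [hsplitp] at hd
        exact hMn (Int.natCast_dvd_natCast.mp hd)
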